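/- arXiv:1701.03896 — 2 statements merged into one kernel-verified Lean document; each statement's English description precedes it below -/
import Mathlib

section
/- For σ, π ∈ S_n and r dividing n, the r-regular Ulam distance d_r(σ,π) equals the minimum number k of translocations φ_1,...,φ_k such that m_σ^r · φ_1 ⋯ φ_k = m_π^r. -/
namespace UlamPaper

/-- Underlying function of the translocation `φ(i,j)` (0-indexed). -/
def tf (i j k : ℕ) : ℕ :=
  if i ≤ j then (if k < i ∨ j < k then k else if k = j then i else k + 1)
  else (if k < j ∨ i < k then k else if k = j then i else k - 1)

theorem tf_lt {n i j k : ℕ} (hi : i < n) (hj : j < n) (hk : k < n) : tf i j k < n := by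
  unfold tf; split_ifs <;> omega

theorem tf_tf (i j k : ℕ) : tf j i (tf i j k) = k := by
  unfold tf; split_ifs <;> omega

/-- The translocation `φ(i,j)` as a permutation of `Fin n`: it deletes the entry in
position `i` and reinserts it at position `j`, shifting intermediate entries. -/
def transloc {n : ℕ} (i j : Fin n) : Equiv.Perm (Fin n) where
  toFun k := ⟨tf i.val j.val k.val, tf_lt i.isLt j.isLt k.isLt⟩
  invFun k := ⟨tf j.val i.val k.val, tf_lt j.isLt i.isLt k.isLt⟩
  left_inv k := Fin.ext (tf_tf i.val j.val k.val)
  right_inv k := Fin.ext (tf_tf j.val i.val k.val)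

/-- `IsTransloc φ` : `φ` is a translocation. -/
def IsTransloc {n : ℕ} (φ : Equiv.Perm (Fin n)) : Prop := ∃ i j : Fin n, φ = transloc i j

/-- Length of the longest common subsequence of two `n`-length sequences. -/
noncomputable def lcsLen {n : ℕ} {α : Type*} (u v : Fin n → α) : ℕ :=
  sSup {k | ∃ f g : Fin k → Fin n, StrictMono f ∧ StrictMono g ∧ ∀ p, u (f p) = v (g p)}

/-- The Ulam distance `d(σ,π) = n - ℓ(σ,π)`. -/
noncomputable def ulamDist {n : ℕ} (σ π : Equiv.Perm (Fin n)) : ℕ :=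
  n - lcsLen (⇑σ) (⇑π)

/-- The `r`-regular multipermutation `m_σ^r` (with values in `[1, n/r]`). -/
def mult {n : ℕ} (r : ℕ) (σ : Equiv.Perm (Fin n)) : Fin n → ℕ :=
  fun i => (σ i).val / r + 1

/-- The `r`-regular Ulam distance, expressed as `n - ℓ(m_σ^r, m_π^r)`. -/
noncomputable def multDist {n : ℕ} (r : ℕ) (σ π : Equiv.Perm (Fin n)) : ℕ :=
  n - lcsLen (mult r σ) (mult r π)
section LCS

variable {n : ℕ} {α : Type*}

lemma mem_lcs_le {u v : Fin n → α} {k : ℕ}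
    (hk : k ∈ {k | ∃ f g : Fin k → Fin n, StrictMono f ∧ StrictMono g ∧ ∀ p, u (f p) = v (g p)}) :
    k ≤ n := by
  obtain ⟨f, _, hf, _, _⟩ := hk
  simpa using Fintype.card_le_of_injective f hf.injective

lemma zero_mem_lcs (u v : Fin n → α) :
    0 ∈ {k | ∃ f g : Fin k → Fin n, StrictMono f ∧ StrictMono g ∧ ∀ p, u (f p) = v (g p)} :=
  ⟨Fin.elim0, Fin.elim0, fun a => a.elim0, fun a => a.elim0, fun p => p.elim0⟩

lemma le_lcsLen {u v : Fin n → α} {k : ℕ} (f g : Fin k → Fin n) (hf : StrictMono f)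
    (hg : StrictMono g) (h : ∀ p, u (f p) = v (g p)) : k ≤ lcsLen u v :=
  le_csSup ⟨n, fun _ h => mem_lcs_le h⟩ ⟨f, g, hf, hg, h⟩

lemma lcsLen_le (u v : Fin n → α) : lcsLen u v ≤ n :=
  csSup_le ⟨0, zero_mem_lcs u v⟩ fun _ h => mem_lcs_le h

lemma lcsLen_spec (u v : Fin n → α) :
    ∃ f g : Fin (lcsLen u v) → Fin n, StrictMono f ∧ StrictMono g ∧ ∀ p, u (f p) = v (g p) :=
  Nat.sSup_mem ⟨0, zero_mem_lcs u v⟩ ⟨n, fun _ h => mem_lcs_le h⟩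

lemma self_le_lcsLen (u : Fin n → α) : n ≤ lcsLen u u :=
  le_lcsLen id id strictMono_id strictMono_id fun _ => rfl

lemma strictMono_fin_id {f : Fin n → Fin n} (hf : StrictMono f) : f = id := by
  have hs : Function.Surjective f := Finite.injective_iff_surjective.mp hf.injective
  have hr : Set.range f = Set.range (id : Fin n → Fin n) := by
    rw [Set.range_eq_univ.mpr hs, Set.range_id]
  haveI : WellFoundedLT (Fin n) := inferInstance
  exact (StrictMono.range_inj hf strictMono_id).1 hr

lemma eq_of_lcsLen_eq {u v : Fin n → α} (h : lcsLen u v = n) : u = v := by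
  obtain ⟨f, g, hf, hg, hw⟩ := h ▸ lcsLen_spec u v
  rw [strictMono_fin_id hf] at hw
  rw [strictMono_fin_id hg] at hw
  exact funext hw

lemma lcs_triangle (u w v : Fin n → α) :
    lcsLen u w + lcsLen w v ≤ n + lcsLen u v := by
  obtain ⟨f1, g1, hf1, hg1, h1⟩ := lcsLen_spec u w
  obtain ⟨f2, g2, hf2, hg2, h2⟩ := lcsLen_spec w v
  set A : Finset (Fin n) := Finset.univ.map ⟨g1, hg1.injective⟩ with hA
  set B : Finset (Fin n) := Finset.univ.map ⟨f2, hf2.injective⟩ with hB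
  have hcard : lcsLen u w + lcsLen w v ≤ n + (A ∩ B).card := by
    have h3 := Finset.card_inter_add_card_union A B
    have h4 : (A ∪ B).card ≤ n := by simpa using Finset.card_le_univ (A ∪ B)
    have h5 : A.card = lcsLen u w := by simp [hA]
    have h6 : B.card = lcsLen w v := by simp [hB]
    omega
  set c := (A ∩ B).card with hc
  let e := (A ∩ B).orderEmbOfFin hc.symm
  have he : ∀ x, e x ∈ A ∩ B := fun x => (A ∩ B).orderEmbOfFin_mem hc.symm x
  have hAx : ∀ x : Fin c, ∃ a, g1 a = e x := by
    intro x
    have := Finset.mem_inter.mp (he x)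
    have h := this.1
    rw [hA, Finset.mem_map] at h
    obtain ⟨a, _, ha⟩ := h
    exact ⟨a, ha⟩
  have hBx : ∀ x : Fin c, ∃ b, f2 b = e x := by
    intro x
    have := Finset.mem_inter.mp (he x)
    have h := this.2
    rw [hB, Finset.mem_map] at h
    obtain ⟨b, _, hb⟩ := h
    exact ⟨b, hb⟩
  choose Af hAf using hAx
  choose Bf hBf using hBx
  have hAm : StrictMono Af := fun x y hxy => hg1.lt_iff_lt.mp (by rw [hAf, hAf]; exact e.strictMono hxy)
  have hBm : StrictMono Bf := fun x y hxy => hf2.lt_iff_lt.mp (by rw [hBf, hBf]; exact e.strictMono hxy)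
  have hle : c ≤ lcsLen u v := by
    refine le_lcsLen (f1 ∘ Af) (g2 ∘ Bf) (hf1.comp hAm) (hg2.comp hBm) (fun x => ?_)
    show u (f1 (Af x)) = v (g2 (Bf x))
    rw [h1, hAf, ← hBf, ← h2]
  omega

end LCS

lemma transloc_apply {n : ℕ} (i j k : Fin n) :
    (transloc i j k).val = tf i.val j.val k.val := rfl

lemma psi_formula (t i k : ℕ) (hk : k ≠ i) :
    tf t i k = (if k < i then k else k - 1) + (if t ≤ (if k < i then k else k - 1) then 1 else 0) := by
  unfold tf; split_ifs <;> omega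

lemma tf_apply_self (i t : ℕ) : tf i t t = i := by
  unfold tf; split_ifs <;> omega

lemma lcs_transloc {n : ℕ} {α : Type*} (w : Fin n → α) (i t : Fin n) :
    n - 1 ≤ lcsLen w (w ∘ ⇑(transloc i t)) := by
  rcases n with _ | m
  · simp
  have ht := t.isLt
  have hi := i.isLt
  have key : m ≤ lcsLen w (w ∘ ⇑(transloc i t)) := by
    refine le_lcsLen
      (fun q : Fin m => ⟨if q.val < i.val then q.val else q.val + 1, by have := q.isLt; split <;> omega⟩)
      (fun q : Fin m => ⟨if q.val < t.val then q.val else q.val + 1, by have := q.isLt; split <;> omega⟩)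
      ?_ ?_ ?_
    · intro a b hab
      have hab' : a.val < b.val := hab
      simp only [Fin.mk_lt_mk]
      split_ifs <;> omega
    · intro a b hab
      have hab' : a.val < b.val := hab
      simp only [Fin.mk_lt_mk]
      split_ifs <;> omega
    · intro q
      have hq := q.isLt
      show w _ = w (transloc i t _)
      congr 1
      apply Fin.ext
      rw [transloc_apply]
      show (if q.val < i.val then q.val else q.val + 1)
          = tf i.val t.val (if q.val < t.val then q.val else q.val + 1)
      unfold tf
      split_ifs <;> omega
  omega

lemma le_of_list {n : ℕ} {α : Type*} (u v : Fin n → α) :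
    ∀ L : List (Equiv.Perm (Fin n)), (∀ φ ∈ L, IsTransloc φ) → u ∘ ⇑L.prod = v →
    n ≤ lcsLen u v + L.length := by
  intro L
  induction L generalizing u with
  | nil =>
    intro _ hprod
    have : u = v := by simpa using hprod
    subst this
    simpa using self_le_lcsLen u
  | cons φ L ih =>
    intro hT hprod
    have h1 : (u ∘ ⇑φ) ∘ ⇑L.prod = v := by
      funext x
      have := congrFun hprod x
      simpa [List.prod_cons, Equiv.Perm.mul_apply] using this
    have h2 := ih (u ∘ ⇑φ) (fun ψ h => hT ψ (List.mem_cons_of_mem _ h)) h1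
    obtain ⟨a, b, rfl⟩ := hT φ List.mem_cons_self
    have h3 := lcs_transloc u a b
    have h4 := lcs_triangle u (u ∘ ⇑(transloc a b)) v
    have h5 := lcsLen_le u (u ∘ ⇑(transloc a b))
    simp only [List.length_cons]
    omega

lemma map_univ_perm {n : ℕ} {α : Type*} (u : Fin n → α) (φ : Equiv.Perm (Fin n)) :
    Finset.univ.val.map (u ∘ ⇑φ) = Finset.univ.val.map u := by
  have h1 : Finset.univ.val.map ⇑φ = Finset.univ.val := by
    have := congrArg Finset.val (Finset.map_univ_equiv φ)
    simpa using this
  conv_rhs => rw [← h1]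
  rw [Multiset.map_map]

lemma step_aux {n ℓ : ℕ} {u v : Fin n → ℕ}
    (huv : Finset.univ.val.map u = Finset.univ.val.map v)
    (f g : Fin ℓ → Fin n) (hf : StrictMono f) (hg : StrictMono g)
    (hw : ∀ p, u (f p) = v (g p)) (hlt : ℓ < n) :
    ∃ φ : Equiv.Perm (Fin n), IsTransloc φ ∧ ℓ + 1 ≤ lcsLen (u ∘ ⇑φ) v := by
  have hn : 0 < n := by omega
  have hcFg : (Finset.univ.map ⟨g, hg.injective⟩ : Finset (Fin n)).card = ℓ := by simp
  -- choose j outside the range of g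
  obtain ⟨j, hj⟩ : ∃ j : Fin n, j ∉ Finset.univ.map ⟨g, hg.injective⟩ := by
    by_contra hc
    push_neg at hc
    have hsub : (Finset.univ : Finset (Fin n)) ⊆ Finset.univ.map ⟨g, hg.injective⟩ :=
      fun x _ => hc x
    have h2 := Finset.card_le_card hsub
    rw [hcFg, Finset.card_univ, Fintype.card_fin] at h2
    omega
  -- multiset complement argument: find i outside range of f with u i = v j
  have hmain : (Finset.univ.map ⟨f, hf.injective⟩ : Finset (Fin n)).val.map u
      = (Finset.univ.map ⟨g, hg.injective⟩ : Finset (Fin n)).val.map v := by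
    rw [Finset.map_val, Finset.map_val, Multiset.map_map, Multiset.map_map]
    exact Multiset.map_congr rfl (fun x _ => hw x)
  have hsplit : ∀ (S : Finset (Fin n)) (w : Fin n → ℕ),
      S.val.map w + ((Finset.univ \ S).val.map w) = Finset.univ.val.map w := by
    intro S w
    rw [Finset.sdiff_val, ← Multiset.map_add,
      add_tsub_cancel_of_le (Finset.val_le_iff.mpr (Finset.subset_univ S))]
  have hcompl : (Finset.univ \ Finset.univ.map ⟨f, hf.injective⟩).val.map u
      = (Finset.univ \ Finset.univ.map ⟨g, hg.injective⟩).val.map v := by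
    have h1 := (hsplit (Finset.univ.map ⟨f, hf.injective⟩) u).trans
      (huv.trans (hsplit (Finset.univ.map ⟨g, hg.injective⟩) v).symm)
    rw [hmain] at h1
    exact add_left_cancel h1
  have hvj : v j ∈ (Finset.univ \ Finset.univ.map ⟨f, hf.injective⟩).val.map u := by
    rw [hcompl]
    exact Multiset.mem_map_of_mem v
      (Finset.mem_val.mpr (Finset.mem_sdiff.mpr ⟨Finset.mem_univ j, hj⟩))
  obtain ⟨i, hiv, hui⟩ := Multiset.mem_map.mp hvj
  have hi : i ∉ Finset.univ.map ⟨f, hf.injective⟩ :=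
    (Finset.mem_sdiff.mp (Finset.mem_val.mp hiv)).2
  have hif : ∀ m : Fin ℓ, f m ≠ i := by
    intro m hm
    exact hi (Finset.mem_map.mpr ⟨m, Finset.mem_univ m, hm⟩)
  have hjg : ∀ m : Fin ℓ, g m ≠ j := by
    intro m hm
    exact hj (Finset.mem_map.mpr ⟨m, Finset.mem_univ m, hm⟩)
  -- the insertion index p
  set p := (Finset.univ.filter (fun q : Fin ℓ => (g q).val < j.val)).card with hp
  have hpl : p ≤ ℓ := by
    have h2 := Finset.card_filter_le (Finset.univ : Finset (Fin ℓ))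
      (fun q => (g q).val < j.val)
    simp only [Finset.card_univ, Fintype.card_fin] at h2
    omega
  have gp1 : ∀ m : Fin ℓ, m.val < p → (g m).val < j.val := by
    intro m hm
    by_contra hc
    push_neg at hc
    have hjlt : j.val < (g m).val := lt_of_le_of_ne hc (fun h => hjg m (Fin.ext h.symm))
    have hsub : Finset.univ.filter (fun q : Fin ℓ => (g q).val < j.val) ⊆ Finset.Iio m := by
      intro a ha
      rw [Finset.mem_filter] at ha
      rw [Finset.mem_Iio]
      by_contra hma
      push_neg at hma
      have h2 : (g m).val ≤ (g a).val := Fin.le_def.mp (hg.monotone hma)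
      omega
    have h2 := Finset.card_le_card hsub
    rw [Fin.card_Iio] at h2
    omega
  have gp2 : ∀ m : Fin ℓ, p ≤ m.val → j.val < (g m).val := by
    intro m hm
    by_contra hc
    push_neg at hc
    have hlt' : (g m).val < j.val := lt_of_le_of_ne hc (fun h => hjg m (Fin.ext h))
    have hsub : Finset.Iic m ⊆ Finset.univ.filter (fun q : Fin ℓ => (g q).val < j.val) := by
      intro a ha
      rw [Finset.mem_Iic] at ha
      rw [Finset.mem_filter]
      exact ⟨Finset.mem_univ a,
        lt_of_le_of_lt (Fin.le_def.mp (hg.monotone ha)) hlt'⟩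
    have h2 := Finset.card_le_card hsub
    rw [Fin.card_Iic] at h2
    omega
  -- rho : position after deleting entry i
  set rho : Fin n → ℕ := fun k => if k.val < i.val then k.val else k.val - 1 with hrho
  have hrho_bound : ∀ k : Fin n, k ≠ i → rho k + 1 < n := by
    intro k hk
    have h1 := k.isLt
    have h2 := i.isLt
    have h3 : k.val ≠ i.val := fun h => hk (Fin.ext h)
    simp only [hrho]
    split_ifs <;> omega
  have hrho_mono : ∀ a b : Fin n, a ≤ b → rho a ≤ rho b := by
    intro a b h
    have h2 : a.val ≤ b.val := h
    simp only [hrho]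
    split_ifs <;> omega
  have hrho_smono : ∀ a b : Fin n, a ≠ i → b ≠ i → a < b → rho a < rho b := by
    intro a b ha hb h
    have h2 : a.val < b.val := h
    have ha2 : a.val ≠ i.val := fun hh => ha (Fin.ext hh)
    have hb2 : b.val ≠ i.val := fun hh => hb (Fin.ext hh)
    simp only [hrho]
    split_ifs <;> omega
  have hpsi : ∀ (tn : ℕ) (k : Fin n), k ≠ i →
      tf tn i.val k.val = rho k + (if tn ≤ rho k then 1 else 0) := by
    intro tn k hk
    have hk2 : k.val ≠ i.val := fun hh => hk (Fin.ext hh)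
    rw [psi_formula tn i.val k.val hk2]
  -- choose the target position tn
  obtain ⟨tn, htlt, key1, key2⟩ : ∃ tn : ℕ, tn < n ∧
      (∀ m : Fin ℓ, m.val < p → tf tn i.val (f m).val < tn) ∧
      (∀ m : Fin ℓ, p ≤ m.val → tn < tf tn i.val (f m).val) := by
    by_cases hp0 : p = 0
    · refine ⟨0, hn, fun m hm => by omega, fun m _ => ?_⟩
      rw [hpsi 0 (f m) (hif m)]
      split_ifs <;> omega
    · have hm1 : p - 1 < ℓ := by omega
      refine ⟨rho (f ⟨p - 1, hm1⟩) + 1, hrho_bound _ (hif _), fun m hm => ?_, fun m hm => ?_⟩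
      · rw [hpsi _ (f m) (hif m)]
        have h3 : rho (f m) ≤ rho (f ⟨p - 1, hm1⟩) :=
          hrho_mono _ _ (hf.monotone (Fin.le_def.mpr (show m.val ≤ p - 1 by omega)))
        split_ifs <;> omega
      · rw [hpsi _ (f m) (hif m)]
        have h3 : rho (f ⟨p - 1, hm1⟩) < rho (f m) :=
          hrho_smono _ _ (hif _) (hif m) (hf (Fin.lt_def.mpr (show p - 1 < m.val by omega)))
        split_ifs <;> omega
  refine ⟨transloc i ⟨tn, htlt⟩, ⟨i, ⟨tn, htlt⟩, rfl⟩, ?_⟩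
  have hpsif : ∀ m m' : Fin ℓ, m < m' → tf tn i.val (f m).val < tf tn i.val (f m').val := by
    intro m m' h
    rw [hpsi tn (f m) (hif m), hpsi tn (f m') (hif m')]
    have h3 : rho (f m) < rho (f m') := hrho_smono _ _ (hif m) (hif m') (hf h)
    split_ifs <;> omega
  have hbound : ∀ m : Fin ℓ, tf tn i.val (f m).val < n := fun m => tf_lt htlt i.isLt (f m).isLt
  refine le_lcsLen
    (fun q : Fin (ℓ + 1) =>
      if hq1 : q.val < p then ⟨tf tn i.val (f ⟨q.val, by omega⟩).val, hbound _⟩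
      else if hq2 : q.val = p then ⟨tn, htlt⟩
      else ⟨tf tn i.val (f ⟨q.val - 1, by have := q.isLt; omega⟩).val, hbound _⟩)
    (fun q : Fin (ℓ + 1) =>
      if hq1 : q.val < p then g ⟨q.val, by omega⟩
      else if hq2 : q.val = p then j
      else g ⟨q.val - 1, by have := q.isLt; omega⟩)
    ?_ ?_ ?_
  · -- StrictMono F
    intro a b hab
    have hab2 : a.val < b.val := hab
    have hbisLt := b.isLt
    dsimp only
    by_cases h1 : a.val < p
    · rw [dif_pos h1]
      by_cases h2 : b.val < p
      · rw [dif_pos h2]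
        exact hpsif _ _ (Fin.mk_lt_mk.mpr hab2)
      · rw [dif_neg h2]
        by_cases h3 : b.val = p
        · rw [dif_pos h3]
          exact Fin.mk_lt_mk.mpr (key1 _ h1)
        · rw [dif_neg h3]
          exact hpsif _ _ (Fin.mk_lt_mk.mpr (by omega))
    · rw [dif_neg h1]
      have hb1 : ¬ b.val < p := by omega
      have hb2 : b.val ≠ p := by omega
      rw [dif_neg hb1, dif_neg hb2]
      by_cases h2 : a.val = p
      · rw [dif_pos h2]
        exact Fin.mk_lt_mk.mpr (key2 _ (show p ≤ b.val - 1 by omega))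
      · rw [dif_neg h2]
        exact hpsif _ _ (Fin.mk_lt_mk.mpr (by omega))
  · -- StrictMono G
    intro a b hab
    have hab2 : a.val < b.val := hab
    have hbisLt := b.isLt
    dsimp only
    by_cases h1 : a.val < p
    · rw [dif_pos h1]
      by_cases h2 : b.val < p
      · rw [dif_pos h2]
        exact hg (Fin.mk_lt_mk.mpr hab2)
      · rw [dif_neg h2]
        by_cases h3 : b.val = p
        · rw [dif_pos h3]
          exact Fin.lt_def.mpr (gp1 _ h1)
        · rw [dif_neg h3]
          exact hg (Fin.mk_lt_mk.mpr (by omega))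
    · rw [dif_neg h1]
      have hb1 : ¬ b.val < p := by omega
      have hb2 : b.val ≠ p := by omega
      rw [dif_neg hb1, dif_neg hb2]
      by_cases h2 : a.val = p
      · rw [dif_pos h2]
        exact Fin.lt_def.mpr (gp2 _ (show p ≤ b.val - 1 by omega))
      · rw [dif_neg h2]
        exact hg (Fin.mk_lt_mk.mpr (by omega))
  · -- values agree
    intro q
    have hqisLt := q.isLt
    by_cases h1 : q.val < p
    · rw [dif_pos h1, dif_pos h1]
      show u (transloc i ⟨tn, htlt⟩ _) = _
      have he : transloc i ⟨tn, htlt⟩ ⟨tf tn i.val (f ⟨q.val, by omega⟩).val, hbound _⟩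
          = f ⟨q.val, by omega⟩ := by
        apply Fin.ext
        rw [transloc_apply]
        exact tf_tf tn i.val _
      rw [he]
      exact hw _
    · rw [dif_neg h1, dif_neg h1]
      by_cases h2 : q.val = p
      · rw [dif_pos h2, dif_pos h2]
        show u (transloc i ⟨tn, htlt⟩ ⟨tn, htlt⟩) = v j
        have he : transloc i ⟨tn, htlt⟩ ⟨tn, htlt⟩ = i := by
          apply Fin.ext
          rw [transloc_apply]
          exact tf_apply_self i.val tn
        rw [he]
        exact hui
      · rw [dif_neg h2, dif_neg h2]
        show u (transloc i ⟨tn, htlt⟩ _) = _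
        have he : transloc i ⟨tn, htlt⟩
            ⟨tf tn i.val (f ⟨q.val - 1, by have := q.isLt; omega⟩).val, hbound _⟩
            = f ⟨q.val - 1, by have := q.isLt; omega⟩ := by
          apply Fin.ext
          rw [transloc_apply]
          exact tf_tf tn i.val _
        rw [he]
        exact hw _

lemma exists_step {n : ℕ} {u v : Fin n → ℕ}
    (huv : Finset.univ.val.map u = Finset.univ.val.map v)
    (hlt : lcsLen u v < n) :
    ∃ φ : Equiv.Perm (Fin n), IsTransloc φ ∧ lcsLen u v + 1 ≤ lcsLen (u ∘ ⇑φ) v := by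
  obtain ⟨f, g, hf, hg, hw⟩ := lcsLen_spec u v
  exact step_aux huv f g hf hg hw hlt

lemma exists_list {n : ℕ} : ∀ (d : ℕ) (u v : Fin n → ℕ),
    Finset.univ.val.map u = Finset.univ.val.map v → n - lcsLen u v ≤ d →
    ∃ L : List (Equiv.Perm (Fin n)),
      (∀ φ ∈ L, IsTransloc φ) ∧ u ∘ ⇑L.prod = v ∧ L.length ≤ d := by
  intro d
  induction d with
  | zero =>
    intro u v huv hd
    have h1 : lcsLen u v = n := le_antisymm (lcsLen_le u v) (by omega)
    refine ⟨[], by simp, ?_, by simp⟩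
    have h2 := eq_of_lcsLen_eq h1
    funext x
    simp [h2]
  | succ d ih =>
    intro u v huv hd
    rcases eq_or_lt_of_le (lcsLen_le u v) with heq | hlt
    · refine ⟨[], by simp, ?_, by simp⟩
      have h2 := eq_of_lcsLen_eq heq
      funext x
      simp [h2]
    · obtain ⟨φ, hφ, hstep⟩ := exists_step huv hlt
      have huv2 : Finset.univ.val.map (u ∘ ⇑φ) = Finset.univ.val.map v :=
        (map_univ_perm u φ).trans huv
      have hd2 : n - lcsLen (u ∘ ⇑φ) v ≤ d := by omega
      obtain ⟨L, hL1, hL2, hL3⟩ := ih (u ∘ ⇑φ) v huv2 hd2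
      refine ⟨φ :: L, ?_, ?_, by simp only [List.length_cons]; omega⟩
      · intro ψ hψ
        rcases List.mem_cons.mp hψ with h | h
        · exact h ▸ hφ
        · exact hL1 ψ h
      · funext x
        have h3 := congrFun hL2 x
        simpa [List.prod_cons, Equiv.Perm.mul_apply] using h3


/-- The `r`-regular Ulam distance equals the minimum number `k` of translocations
`φ_1, …, φ_k` with `m_σ^r · φ_1 ⋯ φ_k = m_π^r`. -/
theorem multDist_eq_min_translocations {n r : ℕ} (hr : 0 < r) (hdvd : r ∣ n)
    (σ π : Equiv.Perm (Fin n)) :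
    multDist r σ π =
      sInf {k | ∃ L : List (Equiv.Perm (Fin n)),
        L.length = k ∧ (∀ φ ∈ L, IsTransloc φ) ∧ mult r σ ∘ ⇑L.prod = mult r π} := by
  have huv : Finset.univ.val.map (mult r σ) = Finset.univ.val.map (mult r π) :=
    (map_univ_perm (fun x : Fin n => x.val / r + 1) σ).trans
      (map_univ_perm (fun x : Fin n => x.val / r + 1) π).symm
  obtain ⟨L0, hL01, hL02, hL03⟩ :=
    exists_list (n - lcsLen (mult r σ) (mult r π)) (mult r σ) (mult r π) huv le_rfl
  have hne : {k | ∃ L : List (Equiv.Perm (Fin n)),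
      L.length = k ∧ (∀ φ ∈ L, IsTransloc φ) ∧ mult r σ ∘ ⇑L.prod = mult r π}.Nonempty :=
    ⟨L0.length, L0, rfl, hL01, hL02⟩
  show n - lcsLen (mult r σ) (mult r π) = _
  apply le_antisymm
  · obtain ⟨L, hlen, hT, hprod⟩ := Nat.sInf_mem hne
    have h2 := le_of_list (mult r σ) (mult r π) L hT hprod
    omega
  · have hmem : L0.length ∈ {k | ∃ L : List (Equiv.Perm (Fin n)),
        L.length = k ∧ (∀ φ ∈ L, IsTransloc φ) ∧ mult r σ ∘ ⇑L.prod = mult r π} :=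
      ⟨L0, rfl, hL01, hL02⟩
    have h3 := Nat.sInf_le hmem
    omega

end UlamPaper
end

section
/- For σ ∈ S_n and r dividing n, the size of the r-regular Ulam sphere of radius 1 centered at m_σ^r is |S(m_σ^r,1)| = 1 + (n−1)² − |D(m_σ^r)| − |E(m_σ^r)|, where D and E are the standard and alternating duplicate translocation sets. -/
namespace UlamPaper

theorem tf_spec (i j k : ℕ) :
    (i ≤ j → (k < i ∨ j < k) → tf i j k = k) ∧
    (i ≤ j → i ≤ k → k < j → tf i j k = k + 1) ∧
    (i ≤ j → i ≤ k → k = j → tf i j k = i) ∧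
    (j < i → (k < j ∨ i < k) → tf i j k = k) ∧
    (j < i → j < k → k ≤ i → tf i j k = k - 1) ∧
    (j < i → k = j → tf i j k = i) := by
  unfold tf; split_ifs <;> omega

section Basics
variable {n : ℕ} {α : Type*}

theorem transloc_apply_val (i j k : Fin n) : ((transloc i j) k).val = tf i.val j.val k.val := rfl

theorem transloc_self (i : Fin n) : transloc i i = 1 := by
  apply Equiv.ext; intro k; apply Fin.ext
  show tf i.val i.val k.val = k.val
  have := tf_spec i.val i.val k.val
  omega

theorem transloc_adj {i j : Fin n} (h : i.val = j.val + 1) : transloc i j = transloc j i := by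
  apply Equiv.ext; intro k; apply Fin.ext
  show tf i.val j.val k.val = tf j.val i.val k.val
  have h1 := tf_spec i.val j.val k.val
  have h2 := tf_spec j.val i.val k.val
  have := i.isLt; have := j.isLt; have := k.isLt
  omega

theorem transloc_apply_snd (i j : Fin n) : (transloc i j) j = i := by
  apply Fin.ext
  show tf i.val j.val j.val = i.val
  have := tf_spec i.val j.val j.val
  omega

theorem transloc_ne_one {i j : Fin n} (h : i ≠ j) : transloc i j ≠ 1 := by
  intro hc
  have := transloc_apply_snd i j
  rw [hc] at this
  exact h (by simpa using this.symm)

/-- pointwise ℕ-version of permutation equality -/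
theorem transloc_eq_pointwise {i j i' j' : Fin n} (h : transloc i j = transloc i' j') :
    ∀ k, k < n → tf i.val j.val k = tf i'.val j'.val k := by
  intro k hk
  have := congrArg (fun (e : Equiv.Perm (Fin n)) => (e ⟨k, hk⟩).val) h
  simpa [transloc_apply_val] using this


theorem tf_at_target {i j : ℕ} : tf i j j = i := by unfold tf; split_ifs <;> omega
theorem tf_fw_succ {i j : ℕ} (h : i < j) : tf i j (j-1) = j := by unfold tf; split_ifs <;> omega
theorem tf_bw_at_jp1 {i j : ℕ} (h : j + 1 < i) : tf i j (j+1) = j := by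
  unfold tf; split_ifs <;> omega
theorem tf_bw_at_i {i j : ℕ} (h : j + 1 < i) : tf i j i = i - 1 := by
  unfold tf; split_ifs <;> omega

theorem tf_fw_spec {i j : ℕ} (h : i < j) (k : ℕ) :
    (k < i → tf i j k = k) ∧ (j < k → tf i j k = k) ∧
    (i ≤ k → k < j → tf i j k = k + 1) ∧ (k = j → tf i j k = i) := by
  unfold tf; split_ifs <;> omega
theorem tf_bw_spec {i j : ℕ} (h : j + 1 < i) (k : ℕ) :
    (k < j → tf i j k = k) ∧ (i < k → tf i j k = k) ∧
    (j < k → k ≤ i → tf i j k = k - 1) ∧ (k = j → tf i j k = i) := by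
  unfold tf; split_ifs <;> omega

theorem tf_inj {n i j i' j' : ℕ} (hi : i < n) (hj : j < n) (hi' : i' < n) (hj' : j' < n)
    (hij : i ≠ j + 1) (hij' : i' ≠ j' + 1) (hne : i ≠ j) (hne' : i' ≠ j')
    (hp : ∀ k, k < n → tf i j k = tf i' j' k) : i = i' ∧ j = j' := by
  have h1 := hp j hj
  have h2 := hp j' hj'
  rcases Nat.lt_or_ge i j with hf | hb
  · rcases Nat.lt_or_ge i' j' with hf' | hb'
    · have e1 : tf i j j = i := tf_at_target
      have e2 : tf i' j' j' = i' := tf_at_target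
      have s2 := tf_fw_spec hf' j
      have s3 := tf_fw_spec hf j'
      omega
    · exfalso
      have hb2 : j' + 1 < i' := by omega
      have h3 := hp (j'+1) (by omega)
      have h4 := hp i' hi'
      clear h1 h2 hp
      have e1 : tf i' j' (j'+1) = j' := tf_bw_at_jp1 hb2
      have e2 : tf i' j' i' = i' - 1 := tf_bw_at_i hb2
      have s1 := tf_fw_spec hf (j'+1)
      have s3 := tf_fw_spec hf i'
      omega
  · rcases Nat.lt_or_ge i' j' with hf' | hb'
    · exfalso
      have hb2 : j + 1 < i := by omega
      have h3 := hp (j+1) (by omega)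
      have h4 := hp i hi
      clear h1 h2 hp
      have e1 : tf i j (j+1) = j := tf_bw_at_jp1 hb2
      have e2 : tf i j i = i - 1 := tf_bw_at_i hb2
      have s1 := tf_fw_spec hf' (j+1)
      have s3 := tf_fw_spec hf' i
      omega
    · have hb2 : j + 1 < i := by omega
      have hb2' : j' + 1 < i' := by omega
      have e1 : tf i j j = i := tf_at_target
      have e2 : tf i' j' j' = i' := tf_at_target
      have s2 := tf_bw_spec hb2' j
      have s3 := tf_bw_spec hb2 j'
      omega

theorem transloc_inj {i j i' j' : Fin n} (hij : i.val ≠ j.val + 1) (hij' : i'.val ≠ j'.val + 1)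
    (hne : i ≠ j) (hne' : i' ≠ j') (h : transloc i j = transloc i' j') : i = i' ∧ j = j' := by
  have := tf_inj i.isLt j.isLt i'.isLt j'.isLt hij hij' (fun hc => hne (Fin.ext hc))
    (fun hc => hne' (Fin.ext hc)) (transloc_eq_pointwise h)
  exact ⟨Fin.ext this.1, Fin.ext this.2⟩

end Basics

/-- The `r`-regular Ulam sphere of radius `t` centered at `m_σ^r`. -/
def multSphere {n : ℕ} (r : ℕ) (σ : Equiv.Perm (Fin n)) (t : ℕ) : Set (Fin n → ℕ) :=
  {x | ∃ π : Equiv.Perm (Fin n), x = mult r π ∧ multDist r σ π ≤ t}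


/-- `T_n`, the unique set of translocations: all `φ(i,j)` with `i − j ≠ 1`. -/
def Tset (n : ℕ) : Set (Equiv.Perm (Fin n)) :=
  {φ | ∃ i j : Fin n, i.val ≠ j.val + 1 ∧ φ = transloc i j}

/-- The standard duplicate translocation set `D(m)`: translocations
`φ(i,j) ∈ T_n \ {e}` with `m(i) = m(j)`, or `m(i) = m(i−1)` (and `i` not the first
index). -/
def Dset {n : ℕ} {α : Type*} (m : Fin n → α) : Set (Equiv.Perm (Fin n)) :=
  {φ | ∃ i j : Fin n, i.val ≠ j.val + 1 ∧ φ ≠ 1 ∧ φ = transloc i j ∧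
    (m i = m j ∨ (0 < i.val ∧
      m i = m ⟨i.val - 1, lt_of_le_of_lt (Nat.sub_le _ _) i.isLt⟩))}

/-- The alternating duplicate translocation set `E(m)`: translocations
`φ(i,j) ∈ T_n \ D(m)` with `i < j` such that for some `k ∈ [i, j−2]`,
`φ(j,k) ∈ T_n \ D(m)` and `m·φ(i,j) = m·φ(j,k)`. -/
def Eset {n : ℕ} {α : Type*} (m : Fin n → α) : Set (Equiv.Perm (Fin n)) :=
  {φ | ∃ i j : Fin n, φ = transloc i j ∧ φ ∈ Tset n ∧ φ ∉ Dset m ∧ i < j ∧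
    ∃ k : Fin n, i ≤ k ∧ k.val + 2 ≤ j.val ∧
      transloc j k ∈ Tset n ∧ transloc j k ∉ Dset m ∧
      m ∘ ⇑(transloc i j) = m ∘ ⇑(transloc j k)}

section Char
variable {n : ℕ} {α : Type*} {m : Fin n → α}

theorem meq_idx (m : Fin n → α) {a b : ℕ} {ha : a < n} {hb : b < n} (h : a = b) :
    m ⟨a, ha⟩ = m ⟨b, hb⟩ := congrArg m (Fin.ext h)

theorem meq_of (m : Fin n → α) {a b : ℕ} {ha : a < n} {hb : b < n} {c d : Fin n}
    (hc : a = c.val) (hd : b = d.val) (hm : m c = m d) : m ⟨a, ha⟩ = m ⟨b, hb⟩ :=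
  (congrArg m (Fin.ext hc)).trans (hm.trans (congrArg m (Fin.ext hd)).symm)

/-- workhorse: extract a pointwise value equality from equality of composed maps. -/
theorem pt_eq {i j i' j' : Fin n} (h : m ∘ ⇑(transloc i j) = m ∘ ⇑(transloc i' j'))
    {k : ℕ} (hk : k < n) {c d : Fin n}
    (hc : tf i.val j.val k = c.val) (hd : tf i'.val j'.val k = d.val) : m c = m d := by
  have h0 := congrFun h ⟨k, hk⟩
  have e1 : (transloc i j) ⟨k, hk⟩ = c := Fin.ext hc
  have e2 : (transloc i' j') ⟨k, hk⟩ = d := Fin.ext hd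
  simpa [Function.comp, e1, e2] using h0

theorem mem_Tset (i j : Fin n) (h : i.val ≠ j.val + 1) : transloc i j ∈ Tset n := ⟨i, j, h, rfl⟩

theorem one_mem_Tset (hn : 0 < n) : (1 : Equiv.Perm (Fin n)) ∈ Tset n :=
  ⟨⟨0, hn⟩, ⟨0, hn⟩, by omega, (transloc_self _).symm⟩

theorem one_not_mem_Dset : (1 : Equiv.Perm (Fin n)) ∉ Dset m := by
  rintro ⟨a, b, -, hne1, -, -⟩; exact hne1 rfl

theorem one_not_mem_Eset : (1 : Equiv.Perm (Fin n)) ∉ Eset m := by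
  rintro ⟨a, b, hab, -, -, hlt, -⟩
  exact transloc_ne_one (Fin.ne_of_lt hlt) hab.symm

theorem Dset_intro {i j : Fin n} (hv : i.val ≠ j.val + 1) (hne : i ≠ j)
    (hc : m i = m j ∨ (0 < i.val ∧
      m i = m ⟨i.val - 1, lt_of_le_of_lt (Nat.sub_le _ _) i.isLt⟩)) :
    transloc i j ∈ Dset m := ⟨i, j, hv, transloc_ne_one hne, rfl, hc⟩

theorem Dset_elim {i j : Fin n} (hv : i.val ≠ j.val + 1) (hne : i ≠ j)
    (h : transloc i j ∈ Dset m) :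
    m i = m j ∨ (0 < i.val ∧
      m i = m ⟨i.val - 1, lt_of_le_of_lt (Nat.sub_le _ _) i.isLt⟩) := by
  obtain ⟨a, b, hv', hne1, heq, hc⟩ := h
  have hab : a ≠ b := by
    rintro rfl; rw [transloc_self] at heq; exact hne1 heq 
  obtain ⟨rfl, rfl⟩ := transloc_inj hv hv' hne hab heq
  exact hc

theorem Eset_elim {i j : Fin n} (hv : i.val ≠ j.val + 1) (hne : i ≠ j)
    (h : transloc i j ∈ Eset m) :
    i < j ∧ ∃ k : Fin n, i ≤ k ∧ k.val + 2 ≤ j.val ∧ transloc j k ∉ Dset m ∧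
      m ∘ ⇑(transloc i j) = m ∘ ⇑(transloc j k) := by
  obtain ⟨a, b, heq, -, -, hlt, k, h1, h2, -, h4, h5⟩ := h
  have hab : a ≠ b := Fin.ne_of_lt hlt
  have hv' : a.val ≠ b.val + 1 := by have := Fin.lt_iff_val_lt_val.mp hlt; omega
  obtain ⟨rfl, rfl⟩ := transloc_inj hv hv' hne hab heq
  exact ⟨hlt, k, h1, h2, h4, h5⟩

theorem bw_not_mem_Eset {i j : Fin n} (h : j.val + 1 < i.val) : transloc i j ∉ Eset m := by
  rintro ⟨a, b, heq, -, -, hlt, -⟩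
  have hab : a ≠ b := Fin.ne_of_lt hlt
  have hv' : a.val ≠ b.val + 1 := by have := Fin.lt_iff_val_lt_val.mp hlt; omega
  have hne : i ≠ j := fun hc => by rw [hc] at h; omega
  obtain ⟨rfl, rfl⟩ := transloc_inj (by omega) hv' hne hab heq
  exact absurd (Fin.lt_iff_val_lt_val.mp hlt) (by omega)

end Char

section Reduce
variable {n : ℕ} {α : Type*} {m : Fin n → α}

theorem R1_idx {i j : ℕ} (hf : i < j) (k : ℕ) :
    tf i j k = tf i (j-1) k ∨ (tf i j k = i ∧ tf i (j-1) k = j) ∨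
    (tf i j k = j ∧ tf i (j-1) k = i) := by
  unfold tf; split_ifs <;> omega

theorem R2_idx {i j : ℕ} (hf : i < j) (hi : 0 < i) (k : ℕ) :
    tf i j k = tf (i-1) j k ∨ (tf i j k = i ∧ tf (i-1) j k = i-1) ∨
    (tf i j k = i-1 ∧ tf (i-1) j k = i) := by
  unfold tf; split_ifs <;> omega

theorem R3_idx {i j : ℕ} (hb : j + 1 < i) (k : ℕ) :
    tf i j k = tf i (j+1) k ∨ (tf i j k = i ∧ tf i (j+1) k = j) ∨
    (tf i j k = j ∧ tf i (j+1) k = i) := by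
  unfold tf; split_ifs <;> omega

theorem R4_idx {i j : ℕ} (hb : j + 1 < i) (k : ℕ) :
    tf i j k = tf (i-1) j k ∨ (tf i j k = i ∧ tf (i-1) j k = i-1) ∨
    (tf i j k = i-1 ∧ tf (i-1) j k = i) := by
  unfold tf; split_ifs <;> omega

theorem reduce_R1 {i j : Fin n} (hf : i.val < j.val) (hm : m i = m j) :
    m ∘ ⇑(transloc i j) =
      m ∘ ⇑(transloc i ⟨j.val - 1, lt_of_le_of_lt (Nat.sub_le _ _) j.isLt⟩) := by
  funext k
  show m ⟨tf i.val j.val k.val, _⟩ = m ⟨tf i.val (j.val - 1) k.val, _⟩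
  rcases R1_idx hf k.val with h | h | h
  · exact meq_idx m h
  · exact meq_of m h.1 h.2 hm
  · exact meq_of m h.1 h.2 hm.symm

theorem reduce_R2 {i j : Fin n} (hf : i.val < j.val) (hi : 0 < i.val)
    (hm : m i = m ⟨i.val - 1, lt_of_le_of_lt (Nat.sub_le _ _) i.isLt⟩) :
    m ∘ ⇑(transloc i j) =
      m ∘ ⇑(transloc ⟨i.val - 1, lt_of_le_of_lt (Nat.sub_le _ _) i.isLt⟩ j) := by
  funext k
  show m ⟨tf i.val j.val k.val, _⟩ = m ⟨tf (i.val - 1) j.val k.val, _⟩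
  rcases R2_idx hf hi k.val with h | h | h
  · exact meq_idx m h
  · exact meq_of m h.1 h.2 hm
  · exact meq_of m h.1 h.2 hm.symm

theorem reduce_R3 {i j : Fin n} (hb : j.val + 1 < i.val) (hm : m i = m j) :
    m ∘ ⇑(transloc i j) = m ∘ ⇑(transloc i ⟨j.val + 1, by omega⟩) := by
  funext k
  show m ⟨tf i.val j.val k.val, _⟩ = m ⟨tf i.val (j.val + 1) k.val, _⟩
  rcases R3_idx hb k.val with h | h | h
  · exact meq_idx m h
  · exact meq_of m h.1 h.2 hm
  · exact meq_of m h.1 h.2 hm.symm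

theorem reduce_R4 {i j : Fin n} (hb : j.val + 1 < i.val)
    (hm : m i = m ⟨i.val - 1, lt_of_le_of_lt (Nat.sub_le _ _) i.isLt⟩) :
    m ∘ ⇑(transloc i j) =
      m ∘ ⇑(transloc ⟨i.val - 1, lt_of_le_of_lt (Nat.sub_le _ _) i.isLt⟩ j) := by
  funext k
  show m ⟨tf i.val j.val k.val, _⟩ = m ⟨tf (i.val - 1) j.val k.val, _⟩
  rcases R4_idx hb k.val with h | h | h
  · exact meq_idx m h
  · exact meq_of m h.1 h.2 hm
  · exact meq_of m h.1 h.2 hm.symm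

end Reduce

section Surj
variable {n : ℕ} {α : Type*}

theorem reduce_aux (m : Fin n → α) (hn : 0 < n) : ∀ μ : ℕ, ∀ i j : Fin n,
    i.val ≠ j.val + 1 →
    (n+1) * i.val + (i.val - j.val) + (j.val - i.val) ≤ μ →
    ∃ ψ ∈ Tset n, ψ ∉ Dset m ∧ ψ ∉ Eset m ∧ m ∘ ⇑(transloc i j) = m ∘ ⇑ψ := by
  intro μ
  induction μ using Nat.strong_induction_on with
  | _ μ IH =>
  intro i j hv hμ
  by_cases hij : i = j
  · subst hij
    exact ⟨1, one_mem_Tset hn, one_not_mem_Dset, one_not_mem_Eset, by rw [transloc_self]⟩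
  have hne : i.val ≠ j.val := fun h => hij (Fin.ext h)
  by_cases hc1 : m i = m j
  · rcases Nat.lt_or_ge i.val j.val with hf | hb
    · -- forward type-1 : go to (i, j-1)
      have hstep := reduce_R1 (m := m) hf hc1
      have hj' : j.val - 1 < n := lt_of_le_of_lt (Nat.sub_le _ _) j.isLt
      obtain ⟨ψ, h1, h2, h3, h4⟩ := IH (μ-1) (by omega) i ⟨j.val - 1, hj'⟩
        (by simp only [Fin.val_mk]; omega)
        (by simp only [Fin.val_mk]; omega)
      exact ⟨ψ, h1, h2, h3, hstep.trans h4⟩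
    · -- backward type-1 : go to (i, j+1)
      have hb2 : j.val + 1 < i.val := by omega
      have hstep := reduce_R3 (m := m) hb2 hc1
      have hj' : j.val + 1 < n := by have := i.isLt; omega
      by_cases hadj : i.val = j.val + 2
      · have hre : transloc i (⟨j.val + 1, hj'⟩ : Fin n) =
            transloc ⟨j.val + 1, hj'⟩ i := transloc_adj (by simp only [Fin.val_mk]; omega)
        rw [hre] at hstep
        have hkey : (n+1) * (j.val+1) + (n+1) = (n+1) * (j.val+2) := by ring
        obtain ⟨ψ, h1, h2, h3, h4⟩ := IH (μ-1) (by omega) ⟨j.val + 1, hj'⟩ i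
          (by simp only [Fin.val_mk]; omega)
          (by simp only [Fin.val_mk]; rw [hadj] at hμ ⊢; omega)
        exact ⟨ψ, h1, h2, h3, hstep.trans h4⟩
      · obtain ⟨ψ, h1, h2, h3, h4⟩ := IH (μ-1) (by omega) i ⟨j.val + 1, hj'⟩
          (by simp only [Fin.val_mk]; omega)
          (by simp only [Fin.val_mk]; omega)
        exact ⟨ψ, h1, h2, h3, hstep.trans h4⟩
  · by_cases hc2 : 0 < i.val ∧ m i = m ⟨i.val - 1, lt_of_le_of_lt (Nat.sub_le _ _) i.isLt⟩
    · obtain ⟨hip, hm2⟩ := hc2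
      have hi' : i.val - 1 < n := lt_of_le_of_lt (Nat.sub_le _ _) i.isLt
      have hkey : (n+1) * (i.val - 1) + (n+1) = (n+1) * i.val := by
        have h1 : i.val - 1 + 1 = i.val := Nat.succ_pred_eq_of_pos hip
        calc (n+1) * (i.val - 1) + (n+1) = (n+1) * ((i.val - 1) + 1) := by ring
        _ = (n+1) * i.val := by rw [h1]
      rcases Nat.lt_or_ge i.val j.val with hf | hb
      · -- forward type-2 : go to (i-1, j)
        have hstep := reduce_R2 (m := m) hf hip hm2
        obtain ⟨ψ, h1, h2, h3, h4⟩ := IH (μ-1) (by omega) ⟨i.val - 1, hi'⟩ j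
          (by simp only [Fin.val_mk]; omega)
          (by simp only [Fin.val_mk]; omega)
        exact ⟨ψ, h1, h2, h3, hstep.trans h4⟩
      · -- backward type-2 : go to (i-1, j)
        have hb2 : j.val + 1 < i.val := by omega
        have hstep := reduce_R4 (m := m) hb2 hm2
        by_cases hadj : i.val = j.val + 2
        · have hre : transloc (⟨i.val - 1, hi'⟩ : Fin n) j =
              transloc j ⟨i.val - 1, hi'⟩ := transloc_adj (by simp only [Fin.val_mk]; omega)
          rw [hre] at hstep
          have hkey2 : (n+1) * j.val + (n+1) + (n+1) = (n+1) * (j.val+2) := by ring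
          obtain ⟨ψ, h1, h2, h3, h4⟩ := IH (μ-1) (by omega) j ⟨i.val - 1, hi'⟩
            (by simp only [Fin.val_mk]; omega)
            (by simp only [Fin.val_mk]; rw [hadj] at hμ ⊢; omega)
          exact ⟨ψ, h1, h2, h3, hstep.trans h4⟩
        · obtain ⟨ψ, h1, h2, h3, h4⟩ := IH (μ-1) (by omega) ⟨i.val - 1, hi'⟩ j
            (by simp only [Fin.val_mk]; omega)
            (by simp only [Fin.val_mk]; omega)
          exact ⟨ψ, h1, h2, h3, hstep.trans h4⟩
    · -- not in D
      have hD : transloc i j ∉ Dset m := by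
        intro h
        rcases Dset_elim hv hij h with h' | h'
        · exact hc1 h'
        · exact hc2 h'
      by_cases hE : transloc i j ∈ Eset m
      · obtain ⟨hlt, k, hik, hk2, hkD, hkeq⟩ := Eset_elim hv hij hE
        refine ⟨transloc j k, mem_Tset j k (by omega), hkD, bw_not_mem_Eset (by omega), hkeq⟩
      · exact ⟨transloc i j, mem_Tset i j hv, hD, hE, rfl⟩

theorem exists_good_rep (m : Fin n → α) (hn : 0 < n) {φ : Equiv.Perm (Fin n)}
    (hφ : φ ∈ Tset n) :
    ∃ ψ ∈ Tset n, ψ ∉ Dset m ∧ ψ ∉ Eset m ∧ m ∘ ⇑φ = m ∘ ⇑ψ := by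
  obtain ⟨i, j, hv, rfl⟩ := hφ
  exact reduce_aux m hn _ i j hv le_rfl

end Surj

section Inj
variable {n : ℕ} {α : Type*}

theorem notD_facts {m : Fin n → α} {a b : Fin n} (hv : a.val ≠ b.val + 1) (hab : a ≠ b)
    (hD : transloc a b ∉ Dset m) :
    m a ≠ m b ∧ (0 < a.val →
      m a ≠ m ⟨a.val - 1, lt_of_le_of_lt (Nat.sub_le _ _) a.isLt⟩) := by
  constructor
  · intro h; exact hD (Dset_intro hv hab (Or.inl h))
  · intro hp h; exact hD (Dset_intro hv hab (Or.inr ⟨hp, h⟩))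

theorem mixed_false (m : Fin n → α) {i j i' j' : Fin n} (hf : i.val < j.val)
    (hb' : j'.val + 1 < i'.val)
    (hm1 : m i ≠ m j) (hm1' : m i' ≠ m j')
    (hm2' : m i' ≠ m ⟨i'.val - 1, lt_of_le_of_lt (Nat.sub_le _ _) i'.isLt⟩)
    (hD : transloc i j ∉ Dset m) (hD' : transloc i' j' ∉ Dset m)
    (hE : transloc i j ∉ Eset m)
    (heq : m ∘ ⇑(transloc i j) = m ∘ ⇑(transloc i' j')) : False := by
  rcases Nat.lt_or_ge j.val j'.val with h1 | h1
  · -- j < j' : m i = m j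
    exact hm1 (pt_eq heq j.isLt (tf_at_target) ((tf_bw_spec hb' j.val).1 h1))
  rcases Nat.lt_or_ge i'.val i.val with h2 | h2
  · -- i' < i : m j' = m i'
    exact hm1' (pt_eq heq j'.isLt ((tf_fw_spec hf j'.val).1 (by omega)) (tf_at_target)).symm
  rcases Nat.lt_or_ge j'.val i.val with h3 | h3
  · -- j' < i : m j' = m i'
    exact hm1' (pt_eq heq j'.isLt ((tf_fw_spec hf j'.val).1 h3) (tf_at_target)).symm
  rcases Nat.lt_or_ge i'.val j.val with h4 | h4
  · -- i' < j : m i = m j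
    exact hm1 (pt_eq heq j.isLt (tf_at_target) ((tf_bw_spec hb' j.val).2.1 h4))
  rcases Nat.lt_or_ge j.val i'.val with h5 | h5
  · -- j < i' : m i' = m (i'-1)
    have hlt : i'.val - 1 < n := lt_of_le_of_lt (Nat.sub_le _ _) i'.isLt
    have hpt : m i' = m ⟨i'.val - 1, hlt⟩ := pt_eq heq i'.isLt
      ((tf_fw_spec hf i'.val).2.1 h5)
      ((tf_bw_spec hb' i'.val).2.2.1 (by omega) (le_refl _))
    exact hm2' hpt
  · -- i' = j : Eset membership
    have hij' : i' = j := Fin.ext (by omega)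
    have hD2 : transloc j j' ∉ Dset m := hij' ▸ hD'
    have heq2 : m ∘ ⇑(transloc i j) = m ∘ ⇑(transloc j j') := hij' ▸ heq
    apply hE
    refine ⟨i, j, rfl, mem_Tset i j (by omega), hD, Fin.lt_def.mpr hf, j', ?_, by omega,
      mem_Tset j j' (by omega), hD2, heq2⟩
    exact Fin.le_def.mpr (by omega)

theorem collide (m : Fin n → α) {i j i' j' : Fin n}
    (hv : i.val ≠ j.val + 1) (hv' : i'.val ≠ j'.val + 1)
    (hD : transloc i j ∉ Dset m) (hD' : transloc i' j' ∉ Dset m)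
    (hE : transloc i j ∉ Eset m) (hE' : transloc i' j' ∉ Eset m)
    (heq : m ∘ ⇑(transloc i j) = m ∘ ⇑(transloc i' j')) :
    transloc i j = transloc i' j' := by
  by_cases hij : i = j
  · by_cases hij' : i' = j'
    · subst hij; subst hij'; rw [transloc_self, transloc_self]
    · exfalso
      have hm1' := (notD_facts hv' hij' hD').1
      have heq2 : m ∘ ⇑(transloc j' j') = m ∘ ⇑(transloc i' j') := by
        rw [transloc_self]
        subst hij; rw [transloc_self] at heq; exact heq
      exact hm1' (pt_eq heq2 j'.isLt (tf_at_target) (tf_at_target)).symm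
  · by_cases hij' : i' = j'
    · exfalso
      have hm1 := (notD_facts hv hij hD).1
      have heq2 : m ∘ ⇑(transloc i j) = m ∘ ⇑(transloc j j) := by
        rw [transloc_self]
        subst hij'; rw [transloc_self] at heq; exact heq
      exact hm1 (pt_eq heq2 j.isLt (tf_at_target) (tf_at_target))
    · -- both non-identity
      obtain ⟨hm1, hm2⟩ := notD_facts hv hij hD
      obtain ⟨hm1', hm2'⟩ := notD_facts hv' hij' hD'
      have hne : i.val ≠ j.val := fun h => hij (Fin.ext h)
      have hne' : i'.val ≠ j'.val := fun h => hij' (Fin.ext h)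
      rcases Nat.lt_or_ge i.val j.val with hf | hb
      · rcases Nat.lt_or_ge i'.val j'.val with hf' | hb'
        · -- FF
          rcases Nat.lt_trichotomy j.val j'.val with h1 | h1 | h1
          · exact absurd (pt_eq heq j'.isLt ((tf_fw_spec hf j'.val).2.1 h1)
              (tf_at_target)).symm hm1'
          · have hjj : j = j' := Fin.ext h1
            subst hjj
            rcases Nat.lt_trichotomy i.val i'.val with h2 | h2 | h2
            · have hlt : i'.val - 1 < n := lt_of_le_of_lt (Nat.sub_le _ _) i'.isLt
              have hpt : m i' = m ⟨i'.val - 1, hlt⟩ := pt_eq heq (by omega : i'.val - 1 < n)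
                (by have s := tf_fw_spec hf (i'.val - 1); omega)
                (by have s := tf_fw_spec hf' (i'.val - 1); simp only [Fin.val_mk]; omega)
              exact absurd hpt (hm2' (by omega))
            · rw [Fin.ext h2]
            · have hlt : i.val - 1 < n := lt_of_le_of_lt (Nat.sub_le _ _) i.isLt
              have hpt : m ⟨i.val - 1, hlt⟩ = m i := pt_eq heq (by omega : i.val - 1 < n)
                (by have s := tf_fw_spec hf (i.val - 1); simp only [Fin.val_mk]; omega)
                (by have s := tf_fw_spec hf' (i.val - 1); omega)
              exact absurd hpt.symm (hm2 (by omega))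
          · exact absurd (pt_eq heq j.isLt (tf_at_target)
              ((tf_fw_spec hf' j.val).2.1 h1)) hm1
        · -- FB mixed
          exact absurd (mixed_false m hf (by omega) hm1 hm1' (hm2' (by omega)) hD hD' hE heq)
            id
      · rcases Nat.lt_or_ge i'.val j'.val with hf' | hb'
        · -- BF mixed
          exact absurd (mixed_false m hf' (by omega) hm1' hm1 (hm2 (by omega)) hD' hD hE'
            heq.symm) id
        · -- BB
          have hb2 : j.val + 1 < i.val := by omega
          have hb2' : j'.val + 1 < i'.val := by omega
          rcases Nat.lt_trichotomy j.val j'.val with h1 | h1 | h1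
          · exact absurd (pt_eq heq j.isLt (tf_at_target)
              ((tf_bw_spec hb2' j.val).1 h1)) hm1
          · have hjj : j = j' := Fin.ext h1
            subst hjj
            rcases Nat.lt_trichotomy i.val i'.val with h2 | h2 | h2
            · have hlt : i'.val - 1 < n := lt_of_le_of_lt (Nat.sub_le _ _) i'.isLt
              have hpt : m i' = m ⟨i'.val - 1, hlt⟩ := pt_eq heq i'.isLt
                ((tf_bw_spec hb2 i'.val).2.1 h2)
                (by have s := tf_bw_spec hb2' i'.val; simp only [Fin.val_mk]; omega)
              exact absurd hpt (hm2' (by omega))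
            · rw [Fin.ext h2]
            · have hlt : i.val - 1 < n := lt_of_le_of_lt (Nat.sub_le _ _) i.isLt
              have hpt : m ⟨i.val - 1, hlt⟩ = m i := pt_eq heq i.isLt
                (by have s := tf_bw_spec hb2 i.val; simp only [Fin.val_mk]; omega)
                ((tf_bw_spec hb2' i.val).2.1 h2)
              exact absurd hpt.symm (hm2 (by omega))
          · exact absurd (pt_eq heq j'.isLt ((tf_bw_spec hb2 j'.val).1 h1)
              (tf_at_target)).symm hm1'

end Inj

section Count
variable {n : ℕ} {α : Type*}

/-- the set of non-identity valid index pairs -/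
def Pni (n : ℕ) : Set (Fin n × Fin n) := {p | p.1.val ≠ p.2.val + 1 ∧ p.1 ≠ p.2}

theorem Pni_ncard (n : ℕ) : (Pni n).ncard = (n - 1) ^ 2 := by
  rcases Nat.eq_zero_or_pos n with rfl | hn
  · have : Pni 0 = ∅ := by
      ext p; exact absurd p.1.isLt (by omega)
    simp [this]
  have hdiag : ({p | p.1 = p.2} : Set (Fin n × Fin n)).ncard = n := by
    have himg : ({p | p.1 = p.2} : Set (Fin n × Fin n)) =
        (fun i : Fin n => (i, i)) '' Set.univ := by
      ext p
      constructor
      · intro h; exact ⟨p.1, trivial, Prod.ext rfl h⟩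
      · rintro ⟨i, -, rfl⟩; rfl
    rw [himg, Set.ncard_image_of_injective _ (fun x y h => (Prod.mk.injEq _ _ _ _).mp h |>.1),
      Set.ncard_univ, Nat.card_eq_fintype_card, Fintype.card_fin]
  have hsucc : ({p | p.1.val = p.2.val + 1} : Set (Fin n × Fin n)).ncard = n - 1 := by
    have himg : ({p | p.1.val = p.2.val + 1} : Set (Fin n × Fin n)) =
        (fun a : Fin (n-1) => ((⟨a.val + 1, by have := a.isLt; omega⟩ : Fin n), (⟨a.val, by have := a.isLt; omega⟩ : Fin n)))
          '' Set.univ := by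
      ext p
      constructor
      · intro h
        simp only [Set.mem_setOf_eq] at h
        have h2 : p.2.val < n - 1 := by have := p.1.isLt; omega
        refine ⟨⟨p.2.val, h2⟩, trivial, ?_⟩
        apply Prod.ext <;> apply Fin.ext <;> simp only [Fin.val_mk] <;> omega
      · rintro ⟨a, -, rfl⟩; simp [Set.mem_setOf_eq]
    rw [himg, Set.ncard_image_of_injective _ ?_, Set.ncard_univ, Nat.card_eq_fintype_card,
      Fintype.card_fin]
    intro x y h
    have := congrArg (fun q : Fin n × Fin n => q.2.val) h
    simp only [Fin.val_mk] at this
    exact Fin.ext this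
  have hsplit : (Set.univ : Set (Fin n × Fin n)) =
      Pni n ∪ ({p | p.1 = p.2} ∪ {p | p.1.val = p.2.val + 1}) := by
    ext p
    simp only [Set.mem_univ, Set.mem_union, Set.mem_setOf_eq, Pni, true_iff]
    by_cases h1 : p.1 = p.2
    · tauto
    · by_cases h2 : p.1.val = p.2.val + 1 <;> tauto
  have hd1 : Disjoint (Pni n) ({p | p.1 = p.2} ∪ {p | p.1.val = p.2.val + 1}) := by
    rw [Set.disjoint_left]
    rintro p ⟨hp1, hp2⟩ (h | h)
    · exact hp2 h
    · exact hp1 h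
  have hd2 : Disjoint ({p | p.1 = p.2} : Set (Fin n × Fin n)) {p | p.1.val = p.2.val + 1} := by
    rw [Set.disjoint_left]
    intro p hp h
    rw [Set.mem_setOf_eq] at hp h
    omega
  have htot : (Set.univ : Set (Fin n × Fin n)).ncard = n * n := by
    rw [Set.ncard_univ, Nat.card_eq_fintype_card, Fintype.card_prod, Fintype.card_fin]
  rw [hsplit, Set.ncard_union_eq hd1 (Set.toFinite _) (Set.toFinite _),
    Set.ncard_union_eq hd2 (Set.toFinite _) (Set.toFinite _), hdiag, hsucc] at htot
  obtain ⟨k, rfl⟩ : ∃ k, n = k + 1 := ⟨n - 1, by omega⟩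
  have hsq : (k + 1 - 1) ^ 2 = k * k := by simp [pow_two]
  have hmul : (k + 1) * (k + 1) = k * k + 2 * k + 1 := by ring
  omega

theorem Tset_eq (hn : 0 < n) :
    Tset n = insert 1 ((fun p : Fin n × Fin n => transloc p.1 p.2) '' Pni n) := by
  ext φ
  constructor
  · rintro ⟨i, j, hv, rfl⟩
    by_cases hij : i = j
    · subst hij; rw [transloc_self]; exact Set.mem_insert _ _
    · exact Set.mem_insert_of_mem _ ⟨(i, j), ⟨hv, hij⟩, rfl⟩
  · rintro (rfl | ⟨p, hp, rfl⟩)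
    · exact one_mem_Tset hn
    · exact mem_Tset p.1 p.2 hp.1

theorem Tset_ncard (hn : 0 < n) : (Tset n).ncard = 1 + (n - 1) ^ 2 := by
  rw [Tset_eq hn]
  have hnot : (1 : Equiv.Perm (Fin n)) ∉
      (fun p : Fin n × Fin n => transloc p.1 p.2) '' Pni n := by
    rintro ⟨p, hp, hep⟩
    exact transloc_ne_one hp.2 hep
  rw [Set.ncard_insert_of_notMem hnot (Set.toFinite _),
    Set.ncard_image_of_injOn ?_, Pni_ncard, Nat.add_comm]
  intro p hp q hq h
  obtain ⟨h1, h2⟩ := transloc_inj hp.1 hq.1 hp.2 hq.2 h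
  exact Prod.ext h1 h2

theorem Dset_subset (m : Fin n → α) : Dset m ⊆ Tset n := by
  rintro φ ⟨i, j, hv, -, rfl, -⟩
  exact mem_Tset i j hv

theorem Eset_subset (m : Fin n → α) : Eset m ⊆ Tset n := by
  rintro φ ⟨i, j, rfl, hT, -⟩
  exact hT

theorem DE_disjoint (m : Fin n → α) : Disjoint (Dset m) (Eset m) := by
  rw [Set.disjoint_left]
  rintro φ hD ⟨i, j, rfl, -, hD', -⟩
  exact hD' hD

theorem image_card (m : Fin n → α) (hn : 0 < n) :
    ((fun φ : Equiv.Perm (Fin n) => m ∘ ⇑φ) '' Tset n).ncard =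
      1 + (n - 1) ^ 2 - (Dset m).ncard - (Eset m).ncard := by
  set M : Equiv.Perm (Fin n) → (Fin n → α) := fun φ => m ∘ ⇑φ with hM
  set G : Set (Equiv.Perm (Fin n)) := Tset n \ (Dset m ∪ Eset m) with hG
  have himg : M '' Tset n = M '' G := by
    apply Set.Subset.antisymm
    · rintro x ⟨φ, hφ, rfl⟩
      obtain ⟨ψ, h1, h2, h3, h4⟩ := exists_good_rep m hn hφ
      exact ⟨ψ, ⟨h1, fun hc => hc.elim h2 h3⟩, h4.symm⟩
    · exact Set.image_mono Set.diff_subset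
  have hinj : Set.InjOn M G := by
    rintro φ ⟨⟨i, j, hv, rfl⟩, hφ2⟩ ψ ⟨⟨i', j', hv', rfl⟩, hψ2⟩ h
    rw [Set.mem_union] at hφ2 hψ2
    push_neg at hφ2 hψ2
    exact collide m hv hv' hφ2.1 hψ2.1 hφ2.2 hψ2.2 h
  rw [himg, Set.ncard_image_of_injOn hinj, hG,
    Set.ncard_diff (Set.union_subset (Dset_subset m) (Eset_subset m)) (Set.toFinite _),
    Set.ncard_union_eq (DE_disjoint m) (Set.toFinite _) (Set.toFinite _), Tset_ncard hn]
  omega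

end Count

section Sphere
variable {n : ℕ}

def sk (a p : ℕ) : ℕ := if p < a then p else p + 1
def unsk (a k : ℕ) : ℕ := if k < a then k else k - 1

theorem sk_lt {n a p : ℕ} (hp : p < n - 1) (ha : a < n) : sk a p < n := by
  unfold sk; split_ifs <;> omega

theorem tf_sk (i j p : ℕ) : tf i j (sk j p) = sk i p := by
  unfold tf sk; split_ifs <;> omega

theorem sk_ne {a p : ℕ} : sk a p ≠ a := by unfold sk; split_ifs <;> omega

theorem sk_unsk {a k : ℕ} (h : k ≠ a) : sk a (unsk a k) = k := by
  unfold sk unsk; split_ifs <;> omega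

theorem unsk_sk {a p : ℕ} : unsk a (sk a p) = p := by
  unfold sk unsk; split_ifs <;> omega

theorem unsk_lt {n a k : ℕ} (hk : k < n) (hka : k ≠ a) (ha : a < n) : unsk a k < n - 1 := by
  unfold unsk; split_ifs <;> omega

theorem sk_strictMono {a p q : ℕ} (h : p < q) : sk a p < sk a q := by
  unfold sk; split_ifs <;> omega

/-- extension of a map `Fin (n-1) → Fin n` to `ℕ`. -/
def extFin {n : ℕ} (h : Fin (n-1) → Fin n) : ℕ → ℕ :=
  fun v => if hv : v < n - 1 then (h ⟨v, hv⟩).val else v + 1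

theorem extFin_pos {h : Fin (n-1) → Fin n} {v : ℕ} (hv : v < n - 1) :
    extFin h v = (h ⟨v, hv⟩).val := dif_pos hv

theorem extFin_neg {h : Fin (n-1) → Fin n} {v : ℕ} (hv : ¬ v < n - 1) :
    extFin h v = v + 1 := dif_neg hv

theorem extFin_lt {h : Fin (n-1) → Fin n} {v : ℕ} (hv : v < n - 1) : extFin h v < n := by
  rw [extFin_pos hv]; exact (h _).isLt

theorem extFin_step {h : Fin (n-1) → Fin n} (hm : StrictMono h) {v w : ℕ}
    (hvw : v < w) (hw : w < n - 1) : extFin h v < extFin h w := by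
  rw [extFin_pos (show v < n - 1 by omega), extFin_pos hw]
  exact hm (Fin.mk_lt_mk.mpr hvw)

theorem extFin_ge {h : Fin (n-1) → Fin n} (hm : StrictMono h) : ∀ v, v ≤ extFin h v := by
  intro v
  induction v with
  | zero => exact Nat.zero_le _
  | succ w ih =>
    by_cases hw : w + 1 < n - 1
    · have := extFin_step hm (show w < w + 1 by omega) hw; omega
    · rw [extFin_neg hw]; omega

theorem extFin_chain {h : Fin (n-1) → Fin n} (hm : StrictMono h) :
    ∀ d v, v + d < n - 1 → extFin h v + d ≤ extFin h (v + d) := by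
  intro d
  induction d with
  | zero => intro v _; simp
  | succ e ih =>
    intro v hv
    have h1 := ih v (by omega)
    have h2 := extFin_step hm (show v + e < v + e + 1 by omega) (by omega : v + e + 1 < n - 1)
    have h3 : v + (e + 1) = v + e + 1 := by omega
    rw [h3]
    omega

theorem extFin_le {h : Fin (n-1) → Fin n} (hm : StrictMono h) : ∀ v, extFin h v ≤ v + 1 := by
  intro v
  by_cases hv : v < n - 1
  · by_contra hc
    have hch := extFin_chain hm (n - 2 - v) v (by omega)
    have harg : v + (n - 2 - v) = n - 2 := by omega
    rw [harg] at hch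
    have := extFin_lt (h := h) (show n - 2 < n - 1 by omega)
    omega
  · rw [extFin_neg hv]

theorem strictMono_eq_sk (hn : 0 < n) (h : Fin (n-1) → Fin n) (hm : StrictMono h) :
    ∃ a : ℕ, a < n ∧ ∀ p : Fin (n-1), (h p).val = sk a p.val := by
  have hex : ∃ v, extFin h v = v + 1 := ⟨n - 1, extFin_neg (by omega)⟩
  set a0 := Nat.find hex with ha0
  have ha0le : a0 ≤ n - 1 := Nat.find_min' hex (extFin_neg (by omega))
  have hup : ∀ d, extFin h (a0 + d) = a0 + d + 1 := by
    intro d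
    induction d with
    | zero => exact Nat.find_spec hex
    | succ e ih =>
      have key : extFin h (a0 + e + 1) = a0 + e + 2 := by
        by_cases hw : a0 + e + 1 < n - 1
        · have h1 := extFin_step hm (show a0 + e < a0 + e + 1 by omega) hw
          have h2 := extFin_le hm (a0 + e + 1)
          omega
        · rw [extFin_neg hw]
      have harg : a0 + (e + 1) = a0 + e + 1 := by omega
      rw [harg, key]
  refine ⟨a0, by omega, ?_⟩
  intro p
  have hpe : extFin h p.val = (h p).val := extFin_pos p.isLt
  unfold sk
  split_ifs with hlt
  · have hnot := Nat.find_min hex hlt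
    have h1 := extFin_ge hm p.val
    have h2 := extFin_le hm p.val
    omega
  · have := hup (p.val - a0)
    have harg : a0 + (p.val - a0) = p.val := by omega
    rw [harg] at this
    omega

theorem mult_comp (r : ℕ) (σ φ : Equiv.Perm (Fin n)) : mult r (σ * φ) = mult r σ ∘ ⇑φ := rfl

theorem count_mult (r : ℕ) (σ : Equiv.Perm (Fin n)) (v : ℕ) :
    (Finset.univ.filter fun k => mult r σ k = v).card =
      (Finset.univ.filter fun t : Fin n => t.val / r + 1 = v).card := by
  apply Finset.card_bij (fun k _ => σ k)
  · intro k hk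
    simp only [Finset.mem_filter, Finset.mem_univ, true_and] at hk ⊢
    exact hk
  · intro p hp q hq hpq
    exact σ.injective hpq
  · intro t ht
    simp only [Finset.mem_filter, Finset.mem_univ, true_and] at ht ⊢
    exact ⟨σ.symm t, by simp only [mult, Equiv.apply_symm_apply]; exact ht, Equiv.apply_symm_apply σ t⟩

theorem card_filter_split (P : Fin n → Prop) [DecidablePred P] (a : Fin n) :
    (Finset.univ.filter P).card =
      ((Finset.univ.erase a).filter P).card + (if P a then 1 else 0) := by
  conv_lhs => rw [← Finset.insert_erase (Finset.mem_univ a)]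
  rw [Finset.filter_insert]
  split_ifs with h
  · rw [Finset.card_insert_of_notMem
      (fun hc => (Finset.mem_erase.mp (Finset.mem_of_mem_filter _ hc)).1 rfl)]
  · rw [Nat.add_zero]

theorem erase_count {mσ mπ : Fin n → ℕ} {a b : Fin n}
    (hagree : ∀ (p : ℕ) (hp : p < n - 1),
      mσ ⟨sk a.val p, sk_lt hp a.isLt⟩ = mπ ⟨sk b.val p, sk_lt hp b.isLt⟩) (v : ℕ) :
    ((Finset.univ.erase a).filter fun k => mσ k = v).card =
      ((Finset.univ.erase b).filter fun k => mπ k = v).card := by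
  apply Finset.card_bij (fun k (hk : k ∈ (Finset.univ.erase a).filter fun k => mσ k = v) =>
    (⟨sk b.val (unsk a.val k.val),
      sk_lt (unsk_lt k.isLt (fun hc => (Finset.mem_erase.mp (Finset.mem_of_mem_filter _ hk)).1
        (Fin.ext hc)) a.isLt) b.isLt⟩ : Fin n))
  · intro k hk
    simp only [Finset.mem_filter, Finset.mem_erase, Finset.mem_univ, true_and, and_true] at hk ⊢
    obtain ⟨hka, hkv⟩ := hk
    have hkane : k.val ≠ a.val := fun hc => hka (Fin.ext hc)
    have hp : unsk a.val k.val < n - 1 := unsk_lt k.isLt hkane a.isLt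
    constructor
    · intro hc
      exact sk_ne (congrArg Fin.val hc)
    · have := (hagree (unsk a.val k.val) hp).symm
      rw [show (⟨sk a.val (unsk a.val k.val), sk_lt hp a.isLt⟩ : Fin n) = k from
        Fin.ext (sk_unsk hkane)] at this
      rw [this, hkv]
  · intro p hp q hq hpq
    have h1 := congrArg Fin.val hpq
    simp only [Fin.val_mk] at h1
    have hpa : p.val ≠ a.val := fun hc =>
      (Finset.mem_erase.mp (Finset.mem_of_mem_filter _ hp)).1 (Fin.ext hc)
    have hqa : q.val ≠ a.val := fun hc =>
      (Finset.mem_erase.mp (Finset.mem_of_mem_filter _ hq)).1 (Fin.ext hc)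
    apply Fin.ext
    have h2 : unsk a.val p.val = unsk a.val q.val := by
      rcases Nat.lt_trichotomy (unsk a.val p.val) (unsk a.val q.val) with hlt | heq | hgt
      · exact absurd h1 (Nat.ne_of_lt (sk_strictMono hlt))
      · exact heq
      · exact absurd h1.symm (Nat.ne_of_lt (sk_strictMono hgt))
    rw [← sk_unsk hpa, ← sk_unsk hqa, h2]
  · intro t ht
    simp only [Finset.mem_filter, Finset.mem_erase, Finset.mem_univ, true_and, and_true] at ht
    obtain ⟨htb, htv⟩ := ht
    have htbne : t.val ≠ b.val := fun hc => htb (Fin.ext hc)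
    have hp : unsk b.val t.val < n - 1 := unsk_lt t.isLt htbne b.isLt
    refine ⟨⟨sk a.val (unsk b.val t.val), sk_lt hp a.isLt⟩, ?_, ?_⟩
    · simp only [Finset.mem_filter, Finset.mem_erase, Finset.mem_univ, true_and, and_true]
      constructor
      · intro hc
        exact sk_ne (congrArg Fin.val hc)
      · have := hagree (unsk b.val t.val) hp
        rw [show (⟨sk b.val (unsk b.val t.val), sk_lt hp b.isLt⟩ : Fin n) = t from
          Fin.ext (sk_unsk htbne)] at this
        rw [this, htv]
    · apply Fin.ext
      simp only [Fin.val_mk]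
      rw [unsk_sk, sk_unsk htbne]

theorem agree_val {mσ mπ : Fin n → ℕ} {a b : Fin n}
    (hcount : ∀ v, (Finset.univ.filter fun k => mσ k = v).card =
      (Finset.univ.filter fun k => mπ k = v).card)
    (hagree : ∀ (p : ℕ) (hp : p < n - 1),
      mσ ⟨sk a.val p, sk_lt hp a.isLt⟩ = mπ ⟨sk b.val p, sk_lt hp b.isLt⟩) :
    mπ b = mσ a := by
  have h1 := hcount (mσ a)
  rw [card_filter_split (fun k => mσ k = mσ a) a, card_filter_split (fun k => mπ k = mσ a) b,
    erase_count hagree (mσ a)] at h1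
  by_cases hba : mπ b = mσ a
  · exact hba
  · exfalso
    rw [if_pos rfl, if_neg hba] at h1
    omega

end Sphere

section Final
variable {n : ℕ} {α : Type*}

theorem lcs_bddAbove (u v : Fin n → α) :
    BddAbove {k | ∃ f g : Fin k → Fin n, StrictMono f ∧ StrictMono g ∧
      ∀ p, u (f p) = v (g p)} := by
  refine ⟨n, fun k hk => ?_⟩
  obtain ⟨f, -, hf, -, -⟩ := hk
  calc k = Fintype.card (Fin k) := (Fintype.card_fin k).symm
  _ ≤ Fintype.card (Fin n) := Fintype.card_le_of_injective f hf.injective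
  _ = n := Fintype.card_fin n

theorem lcs_ge_sub_one (m : Fin n → α) (i j : Fin n) :
    n - 1 ≤ lcsLen m (m ∘ ⇑(transloc i j)) := by
  apply le_csSup (lcs_bddAbove _ _)
  refine ⟨fun p => ⟨sk i.val p.val, sk_lt p.isLt i.isLt⟩,
    fun p => ⟨sk j.val p.val, sk_lt p.isLt j.isLt⟩, ?_, ?_, ?_⟩
  · intro p q hpq
    exact Fin.mk_lt_mk.mpr (sk_strictMono (Fin.lt_def.mp hpq))
  · intro p q hpq
    exact Fin.mk_lt_mk.mpr (sk_strictMono (Fin.lt_def.mp hpq))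
  · intro p
    show m ⟨sk i.val p.val, _⟩ = m ⟨tf i.val j.val (sk j.val p.val), _⟩
    exact meq_idx m (tf_sk i.val j.val p.val).symm

theorem sphere_eq (hn : 0 < n) (r : ℕ) (σ : Equiv.Perm (Fin n)) :
    multSphere r σ 1 = (fun φ : Equiv.Perm (Fin n) => mult r σ ∘ ⇑φ) '' Tset n := by
  ext x
  constructor
  · rintro ⟨π, rfl, hdist⟩
    have hd2 : n - lcsLen (mult r σ) (mult r π) ≤ 1 := hdist
    have hbdd := lcs_bddAbove (mult r σ) (mult r π)
    have hnem : {k | ∃ f g : Fin k → Fin n, StrictMono f ∧ StrictMono g ∧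
        ∀ p, mult r σ (f p) = mult r π (g p)}.Nonempty :=
      ⟨0, Fin.elim0, Fin.elim0, fun p q _ => p.elim0, fun p q _ => p.elim0, fun p => p.elim0⟩
    have hmem : lcsLen (mult r σ) (mult r π) ∈ {k | ∃ f g : Fin k → Fin n,
        StrictMono f ∧ StrictMono g ∧ ∀ p, mult r σ (f p) = mult r π (g p)} :=
      Nat.sSup_mem hnem hbdd
    obtain ⟨f, g, hf, hg, hv⟩ := hmem
    have hL : n - 1 ≤ lcsLen (mult r σ) (mult r π) := by omega
    obtain ⟨a0, ha0, hfa⟩ := strictMono_eq_sk hn (fun p => f (Fin.castLE hL p))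
      (fun p q hpq => hf (show Fin.castLE hL p < Fin.castLE hL q from by
        rw [Fin.lt_def] at hpq ⊢; simpa using hpq))
    obtain ⟨b0, hb0, hgb⟩ := strictMono_eq_sk hn (fun p => g (Fin.castLE hL p))
      (fun p q hpq => hg (show Fin.castLE hL p < Fin.castLE hL q from by
        rw [Fin.lt_def] at hpq ⊢; simpa using hpq))
    set a : Fin n := ⟨a0, ha0⟩ with ha
    set b : Fin n := ⟨b0, hb0⟩ with hb
    have hagree : ∀ (p : ℕ) (hp : p < n - 1),
        mult r σ ⟨sk a.val p, sk_lt hp a.isLt⟩ = mult r π ⟨sk b.val p, sk_lt hp b.isLt⟩ := by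
      intro p hp
      have h0 := hv (Fin.castLE hL ⟨p, hp⟩)
      have e1 : f (Fin.castLE hL ⟨p, hp⟩) = ⟨sk a0 p, sk_lt hp ha0⟩ := Fin.ext (hfa ⟨p, hp⟩)
      have e2 : g (Fin.castLE hL ⟨p, hp⟩) = ⟨sk b0 p, sk_lt hp hb0⟩ := Fin.ext (hgb ⟨p, hp⟩)
      rw [e1, e2] at h0
      exact h0
    have hcount : ∀ v, (Finset.univ.filter fun k => mult r σ k = v).card =
        (Finset.univ.filter fun k => mult r π k = v).card :=
      fun v => (count_mult r σ v).trans (count_mult r π v).symm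
    have hba : mult r π b = mult r σ a := agree_val hcount hagree
    have hxeq : mult r π = mult r σ ∘ ⇑(transloc a b) := by
      funext k
      by_cases hk : k = b
      · subst hk
        show mult r π b = mult r σ ((transloc a b) b)
        rw [transloc_apply_snd, hba]
      · have hkb : k.val ≠ b.val := fun hc => hk (Fin.ext hc)
        have hp : unsk b.val k.val < n - 1 := unsk_lt k.isLt hkb b.isLt
        have h1 := (hagree (unsk b.val k.val) hp).symm
        have e3 : (⟨sk b.val (unsk b.val k.val), sk_lt hp b.isLt⟩ : Fin n) = k :=
          Fin.ext (sk_unsk hkb)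
        rw [e3] at h1
        rw [h1]
        show mult r σ ⟨sk a.val (unsk b.val k.val), _⟩ = mult r σ ⟨tf a.val b.val k.val, _⟩
        have h4 := tf_sk a.val b.val (unsk b.val k.val)
        rw [sk_unsk hkb] at h4
        exact meq_idx (mult r σ) h4.symm
    by_cases hab : a.val = b.val + 1
    · have hre : mult r σ ∘ ⇑(transloc b a) = mult r π := by
        rw [← transloc_adj hab]; exact hxeq.symm
      exact ⟨transloc b a, mem_Tset b a (by omega), hre⟩
    · exact ⟨transloc a b, mem_Tset a b hab, hxeq.symm⟩
  · rintro ⟨φ, ⟨i, j, hvij, rfl⟩, rfl⟩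
    refine ⟨σ * transloc i j, (mult_comp r σ (transloc i j)).symm, ?_⟩
    show n - lcsLen (mult r σ) (mult r (σ * transloc i j)) ≤ 1
    rw [mult_comp]
    have := lcs_ge_sub_one (mult r σ) i j
    omega

end Final

/-- `|S(m_σ^r, 1)| = 1 + (n−1)² − |D(m_σ^r)| − |E(m_σ^r)|`. -/
theorem multSphere_one_card_eq {n r : ℕ} (hn : 0 < n) (hr : 0 < r) (hdvd : r ∣ n)
    (σ : Equiv.Perm (Fin n)) :
    (multSphere r σ 1).ncard =
      1 + (n - 1) ^ 2 - (Dset (mult r σ)).ncard - (Eset (mult r σ)).ncard := by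
  rw [sphere_eq hn r σ, image_card (mult r σ) hn]

end UlamPaper
end
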